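/- Let M be an N×N real matrix with nonnegative entries and let u ∈ ℝ^N have strictly positive entries, and set D(u) = diag(Me + u)^{-1}. Then the Neumann series ∑_{k=0}^{∞} (Mᵀ D(u))^k converges and its sum equals (I − Mᵀ D(u))^{-1}. -/

import Mathlib

/-- `D(u) = diag(Me + u)⁻¹`, the diagonal matrix with entries `1/((Me)_i + u_i)`. -/
noncomputable def Du {N : ℕ} (M : Matrix (Fin N) (Fin N) ℝ) (u : Fin N → ℝ) :
    Matrix (Fin N) (Fin N) ℝ :=
  Matrix.diagonal fun i => ((∑ j, M i j) + u i)⁻¹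

theorem stmt_10 {N : ℕ} (M : Matrix (Fin N) (Fin N) ℝ) (u : Fin N → ℝ)
    (hM : ∀ i j, 0 ≤ M i j) (hu : ∀ i, 0 < u i) :
    HasSum (fun k : ℕ => (M.transpose * Du M u) ^ k)
      (1 - M.transpose * Du M u)⁻¹ := by
  classical
  letI : NormedRing (Matrix (Fin N) (Fin N) ℝ) := Matrix.linftyOpNormedRing
  set B : Matrix (Fin N) (Fin N) ℝ := Du M u * M with hBdef
  have hS : ∀ i, (0:ℝ) ≤ ∑ j, M i j := fun i =>
    Finset.sum_nonneg fun j _ => hM i j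
  have hd : ∀ i, (0:ℝ) < (∑ j, M i j) + u i := fun i =>
    add_pos_of_nonneg_of_pos (hS i) (hu i)
  have hBentry : ∀ i j, B i j = ((∑ k, M i k) + u i)⁻¹ * M i j := by
    intro i j
    simp [hBdef, Du, Matrix.diagonal_mul]
  have hBnorm : ‖B‖ < 1 := by
    have h1 : ‖B‖₊ < 1 := by
      rw [Matrix.linfty_opNNNorm_def]
      refine (Finset.sup_lt_iff (by norm_num : (⊥:NNReal) < 1)).2 fun i _ => ?_
      have key : ∑ j, ‖B i j‖ < 1 := by
        have : ∀ j, ‖B i j‖ = ((∑ k, M i k) + u i)⁻¹ * M i j := by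
          intro j
          rw [hBentry i j, Real.norm_eq_abs, abs_of_nonneg]
          exact mul_nonneg (le_of_lt (inv_pos.2 (hd i))) (hM i j)
        simp_rw [this, ← Finset.mul_sum]
        rw [inv_mul_eq_div, div_lt_one (hd i)]
        exact lt_add_of_pos_right _ (hu i)
      have key2 : ((∑ j, ‖B i j‖₊ : NNReal) : ℝ) < 1 := by push_cast; exact key
      exact_mod_cast key2
    exact_mod_cast h1
  haveI : HasSummableGeomSeries (Matrix (Fin N) (Fin N) ℝ) := by
    letI : NormedAlgebra ℝ (Matrix (Fin N) (Fin N) ℝ) := Matrix.linftyOpNormedAlgebra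
    haveI := FiniteDimensional.complete ℝ (Matrix (Fin N) (Fin N) ℝ)
    infer_instance
  have h1 := hasSum_geom_series_inverse B hBnorm
  have h2 := h1.matrix_transpose
  have hBt : B.transpose = M.transpose * Du M u := by
    rw [hBdef, Matrix.transpose_mul, Du, Matrix.diagonal_transpose]
  have hfun : (fun k : ℕ => (B ^ k).transpose) = fun k : ℕ =>
      (M.transpose * Du M u) ^ k := by
    funext k
    rw [Matrix.transpose_pow, hBt]
  have hval : (Ring.inverse (1 - B)).transpose = (1 - M.transpose * Du M u)⁻¹ := by
    rw [← Matrix.nonsing_inv_eq_ringInverse, Matrix.transpose_nonsing_inv,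
      Matrix.transpose_sub, Matrix.transpose_one, hBt]
  rwa [hfun, hval] at h2
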